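/- arXiv:2201.05838 — 2 statements merged into one kernel-verified Lean document; each statement's English description precedes it below -/
import Mathlib

section
/- If A is a real r×r matrix with ‖A‖² ≤ ρ² (operator norm squared bounded by ρ²), Q_w and P symmetric positive semidefinite, then Tr(f^q(P)) ≤ ρ^{2q} Tr(P) + Tr(Q_w) · Σ_{i=0}^{q-1} ρ^{2i} for all q ≥ 1, where f(X) = A X Aᵀ + Q_w. -/
open Matrix

private lemma trace_nonneg_of_psd {r : ℕ} {X : Matrix (Fin r) (Fin r) ℝ}
    (hX : X.PosSemidef) : 0 ≤ X.trace := by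
  apply Finset.sum_nonneg
  intro i _
  exact hX.diag_nonneg

private lemma colsum_bound {r : ℕ} (A : Matrix (Fin r) (Fin r) ℝ) (v : Fin r → ℝ) :
    ∑ i, (A.mulVec v i) ^ 2 ≤
      ‖Matrix.toEuclideanCLM (𝕜 := ℝ) A‖ ^ 2 * ∑ j, (v j) ^ 2 := by
  set T := Matrix.toEuclideanCLM (𝕜 := ℝ) A
  set x : EuclideanSpace ℝ (Fin r) := (WithLp.equiv 2 _).symm v
  have hx : ‖x‖ ^ 2 = ∑ j, (v j) ^ 2 := by
    rw [EuclideanSpace.norm_eq, Real.sq_sqrt (by positivity)]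
    simp [x, sq_abs]
  have hTx : T x = (WithLp.equiv 2 _).symm (A.mulVec v) := by
    simp [T, x, Matrix.toEuclideanCLM_toLp, Matrix.toLin'_apply]
  have hTx2 : ‖T x‖ ^ 2 = ∑ i, (A.mulVec v i) ^ 2 := by
    rw [hTx, EuclideanSpace.norm_eq, Real.sq_sqrt (by positivity)]
    simp [sq_abs]
  have hle : ‖T x‖ ≤ ‖T‖ * ‖x‖ := T.le_opNorm x
  have : ‖T x‖ ^ 2 ≤ (‖T‖ * ‖x‖) ^ 2 := by
    apply pow_le_pow_left₀ (norm_nonneg _) hle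
  rw [mul_pow, hx, hTx2] at this
  exact this

private lemma trace_mul_transpose {r : ℕ} (M : Matrix (Fin r) (Fin r) ℝ) :
    (M * Mᵀ).trace = ∑ j, ∑ i, (M i j) ^ 2 := by
  simp only [Matrix.trace, Matrix.diag, Matrix.mul_apply, Matrix.transpose_apply, sq]
  exact Finset.sum_comm ..

open scoped MatrixOrder in
private lemma key_step {r : ℕ} (A : Matrix (Fin r) (Fin r) ℝ) (ρ : ℝ)
    (hA : ‖Matrix.toEuclideanCLM (𝕜 := ℝ) A‖ ^ 2 ≤ ρ ^ 2)
    {X : Matrix (Fin r) (Fin r) ℝ} (hX : X.PosSemidef) :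
    (A * X * Aᵀ).trace ≤ ρ ^ 2 * X.trace := by
  set S := CFC.sqrt X with hSdef
  have hS : S.PosSemidef := (CFC.sqrt_nonneg X).posSemidef
  have hSS : S * S = X := CFC.sqrt_mul_sqrt_self X hX.nonneg
  have hSt : Sᵀ = S := by
    have := hS.1
    rwa [Matrix.IsHermitian, Matrix.conjTranspose_eq_transpose_of_trivial] at this
  have hfact : A * X * Aᵀ = (A * S) * (A * S)ᵀ := by
    rw [Matrix.transpose_mul, hSt, ← hSS, Matrix.mul_assoc, Matrix.mul_assoc,
      Matrix.mul_assoc]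
  have htr : (A * X * Aᵀ).trace = ∑ j, ∑ i, ((A * S) i j) ^ 2 := by
    rw [hfact, trace_mul_transpose]
  have htrX : X.trace = ∑ j, ∑ k, (S k j) ^ 2 := by
    rw [← hSS, show S * S = S * Sᵀ from by rw [hSt], trace_mul_transpose]
  rw [htr, htrX, Finset.mul_sum]
  apply Finset.sum_le_sum
  intro j _
  have hcol : ∑ i, ((A * S) i j) ^ 2 = ∑ i, (A.mulVec (fun k => S k j) i) ^ 2 := by
    rfl
  rw [hcol]
  calc ∑ i, (A.mulVec (fun k => S k j) i) ^ 2
      ≤ ‖Matrix.toEuclideanCLM (𝕜 := ℝ) A‖ ^ 2 * ∑ k, (S k j) ^ 2 :=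
        colsum_bound A _
    _ ≤ ρ ^ 2 * ∑ k, (S k j) ^ 2 := by
        apply mul_le_mul_of_nonneg_right hA (by positivity)

/-- If the (ℓ²) operator norm of A satisfies ‖A‖² ≤ ρ², Q_w and P are
symmetric PSD, then Tr(f^q(P)) ≤ ρ^{2q} Tr(P) + Tr(Q_w) · Σ_{i=0}^{q-1} ρ^{2i}
for all q ≥ 1, where f(X) = A X Aᵀ + Q_w. -/
theorem stmt_5 {r : ℕ} (A Qw P : Matrix (Fin r) (Fin r) ℝ) (ρ : ℝ)
    (hA : ‖Matrix.toEuclideanCLM (𝕜 := ℝ) A‖ ^ 2 ≤ ρ ^ 2)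
    (hQ : Qw.PosSemidef) (hP : P.PosSemidef)
    (f : Matrix (Fin r) (Fin r) ℝ → Matrix (Fin r) (Fin r) ℝ)
    (hf : ∀ X, f X = A * X * Aᵀ + Qw) :
    ∀ q : ℕ, 1 ≤ q →
      (f^[q] P).trace ≤ ρ ^ (2 * q) * P.trace
        + Qw.trace * ∑ i ∈ Finset.range q, ρ ^ (2 * i) := by
  have hpsd : ∀ q : ℕ, (f^[q] P).PosSemidef := by
    intro q
    induction q with
    | zero => simpa using hP
    | succ n ih =>
      rw [Function.iterate_succ_apply', hf]
      have h1 : (A * (f^[n] P) * Aᴴ).PosSemidef := ih.mul_mul_conjTranspose_same A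
      rw [Matrix.conjTranspose_eq_transpose_of_trivial] at h1
      exact h1.add hQ
  intro q hq
  induction q with
  | zero => omega
  | succ n ih =>
    rcases Nat.eq_zero_or_pos n with hn | hn
    · subst hn
      simp only [Function.iterate_succ_apply', Function.iterate_zero_apply, hf,
        Matrix.trace_add, Finset.range_one, Finset.sum_singleton, mul_zero, pow_zero, mul_one]
      have := key_step A ρ hA hP
      norm_num
      linarith
    · have ihn := ih hn
      rw [Function.iterate_succ_apply', hf, Matrix.trace_add]
      have hstep := key_step A ρ hA (hpsd n)
      have hρ2 : (0:ℝ) ≤ ρ ^ 2 :=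
        le_trans (by positivity) hA
      have : (A * (f^[n] P) * Aᵀ).trace ≤
          ρ ^ 2 * (ρ ^ (2 * n) * P.trace + Qw.trace * ∑ i ∈ Finset.range n, ρ ^ (2 * i)) :=
        le_trans hstep (mul_le_mul_of_nonneg_left ihn hρ2)
      calc (A * (f^[n] P) * Aᵀ).trace + Qw.trace
          ≤ ρ ^ 2 * (ρ ^ (2 * n) * P.trace + Qw.trace * ∑ i ∈ Finset.range n, ρ ^ (2 * i))
              + Qw.trace := by linarith
        _ = ρ ^ (2 * (n + 1)) * P.trace
              + Qw.trace * ∑ i ∈ Finset.range (n + 1), ρ ^ (2 * i) := by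
            rw [Finset.sum_range_succ' _ n]
            simp only [show ∀ i : ℕ, ρ ^ (2 * (i + 1)) = ρ ^ 2 * ρ ^ (2 * i) from
              fun i => by rw [show 2 * (i + 1) = 2 + 2 * i by ring, pow_add],
              mul_zero, pow_zero, ← Finset.mul_sum]
            ring
end

section
/- Suppose packet failures are i.i.d. Bernoulli with failure probability ε, the age of information satisfies q_k = 1 on success and q_k = q_{k-1} + 1 on failure, and the one-step MSE cost is bounded by c(q) ≤ C ρ^{2q} with ρ ≥ 1. If ε ρ² < 1, then the expected cost in each time slot is bounded: E[c(q_k)] ≤ C ρ² / (1 − ε ρ²) for all k, given q_0 = 1. -/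
lemma geom_aux {x : ℝ} (hx0 : 0 ≤ x) (hx1 : x < 1) (n : ℕ) :
    ∑ i ∈ Finset.range n, x ^ i ≤ 1 / (1 - x) := by
  have h1 : (0:ℝ) < 1 - x := by linarith
  have hne : x ≠ 1 := ne_of_lt hx1
  rw [geom_sum_eq hne n]
  have heq : (x ^ n - 1) / (x - 1) = (1 - x ^ n) / (1 - x) := by
    rw [← neg_div_neg_eq]; ring_nf
  rw [heq]
  have hpn : 0 ≤ x ^ n := pow_nonneg hx0 n
  gcongr
  linarith

/-- With i.i.d. Bernoulli(ε) packet failures, AoI recursion q_k = 1 on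
success and q_k = q_{k-1}+1 on failure with q_0 = 1, the AoI at slot k has distribution
P(q_k = j) = (1−ε)ε^{j−1} for 1 ≤ j ≤ k and P(q_k = k+1) = ε^k.  If the one-step cost
satisfies c(q) ≤ C ρ^{2q} with C > 0, ρ ≥ 1, and ε ρ² < 1, then the expected cost in
each slot is bounded: E[c(q_k)] ≤ C ρ² / (1 − ε ρ²). -/
theorem stmt_7 (ε ρ C : ℝ) (c : ℕ → ℝ)
    (hε0 : 0 ≤ ε) (hε1 : ε < 1) (hρ : 1 ≤ ρ) (hC : 0 < C)
    (hstab : ε * ρ ^ 2 < 1)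
    (hc : ∀ q : ℕ, c q ≤ C * ρ ^ (2 * q)) :
    ∀ k : ℕ,
      (∑ j ∈ Finset.Icc 1 k, (1 - ε) * ε ^ (j - 1) * c j) + ε ^ k * c (k + 1)
        ≤ C * ρ ^ 2 / (1 - ε * ρ ^ 2) := by
  intro k
  set x := ε * ρ ^ 2 with hxdef
  have hρ2 : (1:ℝ) ≤ ρ ^ 2 := one_le_pow₀ hρ
  have hx0 : 0 ≤ x := mul_nonneg hε0 (by positivity)
  -- Step 1: replace c by its bound
  have step1 : (∑ j ∈ Finset.Icc 1 k, (1 - ε) * ε ^ (j - 1) * c j) + ε ^ k * c (k + 1)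
      ≤ (∑ j ∈ Finset.Icc 1 k, (1 - ε) * ε ^ (j - 1) * (C * ρ ^ (2 * j)))
        + ε ^ k * (C * ρ ^ (2 * (k + 1))) := by
    apply add_le_add
    · apply Finset.sum_le_sum
      intro j _
      exact mul_le_mul_of_nonneg_left (hc j)
        (mul_nonneg (by linarith) (pow_nonneg hε0 _))
    · exact mul_le_mul_of_nonneg_left (hc (k+1)) (pow_nonneg hε0 _)
  refine step1.trans ?_
  -- Step 2: rewrite sum
  have hre : (∑ j ∈ Finset.Icc 1 k, (1 - ε) * ε ^ (j - 1) * (C * ρ ^ (2 * j)))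
      = ∑ i ∈ Finset.range k, C * ρ ^ 2 * ((1 - ε) * x ^ i) := by
    rw [← Finset.Ico_add_one_right_eq_Icc, Finset.sum_Ico_eq_sum_range]
    simp only [Nat.succ_sub_one, Nat.add_sub_cancel, Nat.add_sub_cancel_left]
    apply Finset.sum_congr rfl
    intro i _
    have h2 : ρ ^ (2 * (1 + i)) = ρ ^ 2 * (ρ ^ 2) ^ i := by
      rw [← pow_mul]; ring_nf
    rw [h2, hxdef, mul_pow]
    ring_nf
  rw [hre]
  have htail : ε ^ k * (C * ρ ^ (2 * (k + 1))) = C * ρ ^ 2 * x ^ k := by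
    have h2 : ρ ^ (2 * (k + 1)) = (ρ ^ 2) ^ k * ρ ^ 2 := by
      rw [← pow_mul]; ring_nf
    rw [h2, hxdef, mul_pow]; ring
  rw [htail]
  have hbound : (∑ i ∈ Finset.range k, C * ρ ^ 2 * ((1 - ε) * x ^ i)) + C * ρ ^ 2 * x ^ k
      ≤ C * ρ ^ 2 * ∑ i ∈ Finset.range (k + 1), x ^ i := by
    rw [Finset.sum_range_succ, ← Finset.mul_sum, mul_add]
    refine add_le_add ?_ le_rfl
    apply mul_le_mul_of_nonneg_left _ (by positivity : (0:ℝ) ≤ C * ρ ^ 2)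
    apply Finset.sum_le_sum
    intro i _
    nlinarith [pow_nonneg hx0 i]
  refine hbound.trans ?_
  rw [div_eq_mul_one_div]
  exact mul_le_mul_of_nonneg_left (geom_aux hx0 hstab (k+1)) (by positivity)
end
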